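/- arXiv:2204.01151 — 4 statements merged into one kernel-verified Lean document; each statement's English description precedes it below -/
import Mathlib

section
/- For all integers r, j with 2 ≤ j ≤ r, one has ∑_{i=1}^{j} binom(r, i-1) · binom(r-i, j-i) · (-1)^{j-i} = 1. -/
open Finset

private lemma key_sum : ∀ (m r : ℕ), m < r →
    ∑ k ∈ Finset.range (m + 1),
      ((r.choose k : ℤ) * ((r - 1 - k).choose (m - k) : ℤ) * (-1) ^ (m - k)) = 1 := by
  intro m
  induction m with
  | zero => intro r hr; simp
  | succ m ih =>
    intro r hr
    have hm : m < r := Nat.lt_of_succ_lt hr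
    -- B : the "full" alternating sum vanishes
    have hB : ∑ k ∈ Finset.range (m + 2),
        ((r.choose k : ℤ) * ((r - k).choose (m + 1 - k) : ℤ) * (-1) ^ (m + 1 - k)) = 0 := by
      have : ∀ k ∈ Finset.range (m + 2),
          ((r.choose k : ℤ) * ((r - k).choose (m + 1 - k) : ℤ) * (-1) ^ (m + 1 - k))
          = ((r.choose (m + 1) : ℤ) * (-1) ^ (m + 1)) * ((-1) ^ k * ((m + 1).choose k : ℤ)) := by
        intro k hk
        rw [Finset.mem_range] at hk
        have hk' : k ≤ m + 1 := Nat.lt_succ_iff.mp hk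
        have hchain : (r.choose (m + 1)) * ((m + 1).choose k)
            = (r.choose k) * ((r - k).choose (m + 1 - k)) := Nat.choose_mul hk'
        have hsign : ((-1 : ℤ)) ^ (m + 1 - k) * (-1) ^ k = (-1) ^ (m + 1) := by
          rw [← pow_add, Nat.sub_add_cancel hk']
        have hsign' : ((-1 : ℤ)) ^ (m + 1 - k) = (-1) ^ (m + 1) * (-1) ^ k := by
          rw [← hsign, mul_assoc, ← pow_add, ← two_mul, pow_mul, neg_one_sq, one_pow, mul_one]
        have hchain' : ((r.choose (m + 1) : ℤ)) * ((m + 1).choose k : ℤ)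
            = (r.choose k : ℤ) * ((r - k).choose (m + 1 - k) : ℤ) := by exact_mod_cast hchain
        rw [hsign']
        linear_combination (-((-1 : ℤ) ^ (m + 1) * (-1) ^ k)) * hchain' 
      rw [Finset.sum_congr rfl this, ← Finset.mul_sum]
      have := Int.alternating_sum_range_choose_of_ne (Nat.succ_ne_zero m)
      rw [this]
      ring
    -- split the last term of B
    rw [Finset.sum_range_succ] at hB
    simp only [Nat.sub_self, Nat.choose_zero_right, pow_zero] at hB
    -- main sum : split last term
    rw [Finset.sum_range_succ]
    have hlast : ((r.choose (m + 1) : ℤ) * ((r - 1 - (m + 1)).choose (m + 1 - (m + 1)) : ℤ)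
        * (-1) ^ (m + 1 - (m + 1))) = (r.choose (m + 1) : ℤ) := by
      simp
    rw [hlast]
    -- rewrite each remaining term using Pascal
    have hterm : ∀ k ∈ Finset.range (m + 1),
        ((r.choose k : ℤ) * ((r - 1 - k).choose (m + 1 - k) : ℤ) * (-1) ^ (m + 1 - k))
        = ((r.choose k : ℤ) * ((r - k).choose (m + 1 - k) : ℤ) * (-1) ^ (m + 1 - k))
          + ((r.choose k : ℤ) * ((r - 1 - k).choose (m - k) : ℤ) * (-1) ^ (m - k)) := by
      intro k hk
      rw [Finset.mem_range] at hk
      have hk' : k ≤ m := Nat.lt_succ_iff.mp hk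
      have h1 : r - k = (r - 1 - k) + 1 := by omega
      have h2 : m + 1 - k = (m - k) + 1 := by omega
      rw [h1, h2, Nat.choose_succ_succ]
      push_cast
      ring
    rw [Finset.sum_congr rfl hterm, Finset.sum_add_distrib, ih r hm]
    have hA : ∑ k ∈ Finset.range (m + 1),
        ((r.choose k : ℤ) * ((r - k).choose (m + 1 - k) : ℤ) * (-1) ^ (m + 1 - k))
        = -(r.choose (m + 1) : ℤ) := by push_cast at hB; linarith [hB]
    rw [hA]
    ring

theorem sum_binom_alt_eq_one (r j : ℕ) (h2 : 2 ≤ j) (hjr : j ≤ r) :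
    ∑ i ∈ Finset.Icc 1 j,
      ((r.choose (i - 1) : ℤ) * ((r - i).choose (j - i) : ℤ) * (-1) ^ (j - i)) = 1 := by
  obtain ⟨m, rfl⟩ : ∃ m, j = m + 1 := ⟨j - 1, by omega⟩
  have hm : m < r := by omega
  have hmap : Finset.Icc 1 (m + 1)
      = Finset.map ⟨fun k => k + 1, add_left_injective 1⟩ (Finset.range (m + 1)) := by
    ext x
    simp only [Finset.mem_Icc, Finset.mem_map, Finset.mem_range, Function.Embedding.coeFn_mk]
    constructor
    · rintro ⟨h1, h2⟩; exact ⟨x - 1, by omega, by omega⟩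
    · rintro ⟨a, ha, rfl⟩; simp; omega
  rw [hmap, Finset.sum_map]
  refine Eq.trans (Finset.sum_congr rfl ?_) (key_sum m r hm)
  intro k hk
  simp only [Function.Embedding.coeFn_mk, Nat.add_sub_cancel]
  have e2 : r - (k + 1) = r - 1 - k := by omega
  have e3 : m + 1 - (k + 1) = m - k := by omega
  rw [e2, e3]
end

section
/- For all integers r, j with 2 ≤ j ≤ r, one has ∑_{i=1}^{j} i · binom(r, i-1) · binom(r-i, j-i) · (-1)^{j-i} = r + 1. -/
open Finset Nat

lemma alt_inner (k : ℕ) (h1 : 1 ≤ k) :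
    ∑ m ∈ range (k+1), (-1:ℤ)^(k-m) * (k.choose m) = 0 := by
  rw [← Finset.sum_range_reflect]
  have : ∀ m ∈ range (k+1), (-1:ℤ)^(k-(k+1-1-m)) * (k.choose (k+1-1-m))
      = (-1:ℤ)^m * (k.choose m) := by
    intro m hm
    rw [mem_range] at hm
    have h2 : k - (k+1-1-m) = m := by omega
    have h3 : k+1-1-m = k - m := by omega
    rw [h2, h3, Nat.choose_symm (by omega)]
  rw [Finset.sum_congr rfl this]
  exact Int.alternating_sum_range_choose_of_ne (by omega)

lemma gsum (n k : ℕ) (h1 : 1 ≤ k) (hkn : k ≤ n) :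
    ∑ m ∈ range (k+1), ((-1:ℤ)^(k-m) * (n.choose m) * ((n-m).choose (k-m))) = 0 := by
  have h : ∀ m ∈ range (k+1), ((-1:ℤ)^(k-m) * (n.choose m) * ((n-m).choose (k-m)))
      = (n.choose k : ℤ) * ((-1:ℤ)^(k-m) * (k.choose m)) := by
    intro m hm
    rw [mem_range] at hm
    have h0 := Nat.choose_mul (n := n) (show m ≤ k by omega)
    have hc : (n.choose k : ℤ) * (k.choose m) = (n.choose m : ℤ) * ((n-m).choose (k-m)) := by
      exact_mod_cast congrArg (Nat.cast (R := ℤ)) h0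
    linear_combination (-(-1:ℤ)^(k-m)) * hc
  rw [Finset.sum_congr rfl h, ← Finset.mul_sum, alt_inner k h1, mul_zero]

lemma fsum : ∀ (k n : ℕ), k < n →
    ∑ m ∈ range (k+1), ((-1:ℤ)^(k-m) * (n.choose m) * ((n-1-m).choose (k-m))) = 1 := by
  intro k
  induction k with
  | zero => intro n hn; simp
  | succ k ih =>
    intro n hn
    have hIH := ih n (by omega)
    have hG := gsum n (k+1) (by omega) (by omega)
    rw [Finset.sum_range_succ] at hG
    rw [Finset.sum_range_succ]
    have hsplit : ∀ m ∈ range (k+1),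
        (-1:ℤ)^(k+1-m) * (n.choose m) * ((n-m).choose (k+1-m))
        = -((-1:ℤ)^(k-m) * (n.choose m) * ((n-1-m).choose (k-m)))
          + -((-1:ℤ)^(k-m) * (n.choose m) * ((n-1-m).choose (k+1-m))) := by
      intro m hm
      rw [mem_range] at hm
      have h1 : n - m = (n-1-m) + 1 := by omega
      have h2 : k + 1 - m = (k-m) + 1 := by omega
      rw [h1, h2, Nat.choose_succ_succ]
      push_cast
      rw [pow_succ]
      ring
    rw [Finset.sum_congr rfl hsplit, Finset.sum_add_distrib] at hG
    have hgoal : ∀ m ∈ range (k+1),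
        (-1:ℤ)^(k+1-m) * (n.choose m) * ((n-1-m).choose (k+1-m))
        = -((-1:ℤ)^(k-m) * (n.choose m) * ((n-1-m).choose (k+1-m))) := by
      intro m hm
      rw [mem_range] at hm
      have h2 : k + 1 - m = (k-m) + 1 := by omega
      rw [h2, pow_succ]; ring
    rw [Finset.sum_congr rfl hgoal]
    simp only [Finset.sum_neg_distrib] at hG ⊢
    simp only [Nat.sub_self, pow_zero, Nat.choose_zero_right, Nat.cast_one, one_mul, mul_one] at hG ⊢
    linarith [hIH, hG]

theorem sum_binom_alt_eq_r_add_one (r j : ℕ) (h2 : 2 ≤ j) (hjr : j ≤ r) :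
    ∑ i ∈ Finset.Icc 1 j,
      ((i : ℤ) * (r.choose (i - 1) : ℤ) * ((r - i).choose (j - i) : ℤ) * (-1) ^ (j - i))
      = (r : ℤ) + 1 := by
  rw [← Finset.Ico_add_one_right_eq_Icc, Finset.sum_Ico_eq_sum_range]
  rw [show j + 1 - 1 = j from rfl]
  have hterm : ∀ m ∈ range j,
      (((1+m : ℕ) : ℤ) * (r.choose ((1+m) - 1) : ℤ) * ((r - (1+m)).choose (j - (1+m)) : ℤ) * (-1) ^ (j-(1+m)))
      = ((-1:ℤ)^(j-1-m) * (r.choose m) * ((r-1-m).choose (j-1-m)))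
        + (m : ℤ) * ((-1:ℤ)^(j-1-m) * (r.choose m) * ((r-1-m).choose (j-1-m))) := by
    intro m hm; rw [mem_range] at hm
    have e1 : (1+m)-1 = m := by omega
    have e2 : r-(1+m) = r-1-m := by omega
    have e3 : j-(1+m) = j-1-m := by omega
    rw [e1, e2, e3]; push_cast; ring
  rw [Finset.sum_congr rfl hterm, Finset.sum_add_distrib]
  have hB : ∑ m ∈ range j, ((-1:ℤ)^(j-1-m) * (r.choose m) * ((r-1-m).choose (j-1-m))) = 1 := by
    have h := fsum (j-1) r (by omega)
    rw [show (j-1)+1 = j by omega] at h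
    exact h
  have hA : ∑ m ∈ range j, (m : ℤ) * ((-1:ℤ)^(j-1-m) * (r.choose m) * ((r-1-m).choose (j-1-m))) = r := by
    rw [show j = (j-2)+1+1 by omega, Finset.sum_range_succ']
    have hz : ((0:ℕ) : ℤ) * ((-1:ℤ)^((j-2)+1+1-1-0) * (r.choose 0) * ((r-1-0).choose ((j-2)+1+1-1-0))) = 0 := by
      simp
    rw [hz, add_zero]
    have hterm2 : ∀ l ∈ range ((j-2)+1),
        ((l+1 : ℕ) : ℤ) * ((-1:ℤ)^((j-2)+1+1-1-(l+1)) * (r.choose (l+1)) * ((r-1-(l+1)).choose ((j-2)+1+1-1-(l+1))))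
        = (r : ℤ) * ((-1:ℤ)^((j-2)-l) * ((r-1).choose l) * ((r-1-1-l).choose ((j-2)-l))) := by
      intro l hl; rw [mem_range] at hl
      have e1 : (j-2)+1+1-1-(l+1) = (j-2)-l := by omega
      have e2 : r-1-(l+1) = r-1-1-l := by omega
      have hmul : (r : ℤ) * ((r-1).choose l) = ((l+1 : ℕ) : ℤ) * (r.choose (l+1)) := by
        have h5 := Nat.add_one_mul_choose_eq (r-1) l
        rw [show r-1+1 = r by omega] at h5
        exact_mod_cast h5.trans (Nat.mul_comm _ _)
      rw [e1, e2]
      push_cast at hmul ⊢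
      linear_combination (-(-1:ℤ)^(j-2-l) * ((r-1-1-l).choose (j-2-l) : ℤ)) * hmul
    rw [Finset.sum_congr rfl hterm2, ← Finset.mul_sum, fsum (j-2) (r-1) (by omega), mul_one]
  rw [hB, hA]
  ring
end

section
/- In the polynomial ring ℚ[x,q], for any integer r ≥ 1 and constants χ, c, M, m ∈ ℚ with m ≠ 0, the following identity holds: (χ/m)·x^{r} + ∑_{j=1}^{r} (1/m)·(j − χ)·binom(r, j-1)·c^{j-1}·(M − c·(r+1)/j)·q^{j}·x^{r-j} = (χ/m)·(x + c·q)^{r} + [ (1/m)·(r+1−χ)·(M − c) − (M/m)·r ]·q·(x + c·q)^{r-1} + ∑_{j=2}^{r} (1/m)·c^{j-1}·(r+1−χ)·(M − c)·q^{j}·(x + c·q)^{r-j}. -/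
open MvPolynomial Finset

-- scalar per-coefficient identity
lemma coeffId (r n : ℕ) (hn1 : 1 ≤ n) (hnr : n ≤ r) (χ c M : ℚ) :
    ((n:ℚ) - χ) * (r.choose (n-1) : ℚ) * (M - c*((r:ℚ)+1)/(n:ℚ)) =
      χ * c * (r.choose n : ℚ) - M * r * ((r-1).choose (n-1) : ℚ)
        + ((r:ℚ)+1-χ)*(M-c) * (r.choose (n-1) : ℚ) := by
  have hn0 : (n:ℚ) ≠ 0 := Nat.cast_ne_zero.2 (by omega)
  have h1 : (n:ℚ) * (r.choose n : ℚ) = ((r:ℚ) - n + 1) * (r.choose (n-1) : ℚ) := by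
    have h := Nat.choose_succ_right_eq r (n-1)
    rw [Nat.sub_add_cancel hn1] at h
    have hc : (r.choose n : ℚ) * n = (r.choose (n-1) : ℚ) * (((r : ℕ) - (n-1) : ℕ) : ℚ) := by
      exact_mod_cast congrArg (Nat.cast : ℕ → ℚ) h
    have hsub : (((r : ℕ) - (n-1) : ℕ) : ℚ) = (r:ℚ) - n + 1 := by
      have h1' : (n - 1 : ℕ) ≤ r := by omega
      rw [Nat.cast_sub h1', Nat.cast_sub hn1]; push_cast; ring
    rw [hsub] at hc; linarith [hc]
  have h2 : (r:ℚ) * ((r-1).choose (n-1) : ℚ) = (n:ℚ) * (r.choose n : ℚ) := by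
    have h := Nat.add_one_mul_choose_eq (r-1) (n-1)
    rw [Nat.sub_add_cancel (le_trans hn1 hnr),
        Nat.sub_add_cancel hn1] at h
    have := congrArg (Nat.cast : ℕ → ℚ) h
    push_cast at this; linarith [this]
  apply mul_left_cancel₀ hn0
  have hd : (n:ℚ) * (M - c*((r:ℚ)+1)/(n:ℚ)) = M * n - c*((r:ℚ)+1) := by
    field_simp
  calc (n:ℚ) * (((n:ℚ) - χ) * (r.choose (n-1) : ℚ) * (M - c*((r:ℚ)+1)/(n:ℚ)))
      = ((n:ℚ) - χ) * (r.choose (n-1) : ℚ) * ((n:ℚ) * (M - c*((r:ℚ)+1)/(n:ℚ))) := by ring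
    _ = ((n:ℚ) - χ) * (r.choose (n-1) : ℚ) * (M * n - c*((r:ℚ)+1)) := by rw [hd]
    _ = (n:ℚ) * (χ * c * (r.choose n : ℚ) - M * r * ((r-1).choose (n-1) : ℚ)
        + ((r:ℚ)+1-χ)*(M-c) * (r.choose (n-1) : ℚ)) := by
        linear_combination (M*(n:ℚ) - χ*c) * h1 + M*(n:ℚ) * h2

lemma hockey (r n : ℕ) (h2 : 2 ≤ n) (hnr : n ≤ r) :
    ∑ j ∈ Finset.Icc 2 n, ((r-j).choose (n-j)) = (r-1).choose (n-2) := by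
  have step1 : ∑ j ∈ Finset.Icc 2 n, ((r-j).choose (n-j))
      = ∑ t ∈ Finset.Icc (r-n) (r-2), t.choose (r-n) := by
    apply Finset.sum_nbij' (fun j => r - j) (fun t => r - t)
    · intro a ha; simp only [Finset.mem_Icc] at *; omega
    · intro a ha; simp only [Finset.mem_Icc] at *; omega
    · intro a ha; simp only [Finset.mem_Icc] at *; omega
    · intro a ha; simp only [Finset.mem_Icc] at *; omega
    · intro a ha
      simp only [Finset.mem_Icc] at ha
      exact (Nat.choose_symm_of_eq_add (by omega)).symm
  rw [step1, Nat.sum_Icc_choose]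
  rw [← Nat.choose_symm (by omega : r - n + 1 ≤ r - 2 + 1)]
  congr 1 <;> omega

lemma pascal' (r n : ℕ) (h1 : 1 ≤ n) (hnr : n ≤ r) :
    (r-1).choose (n-1) + ∑ j ∈ Finset.Icc 2 n, ((r-j).choose (n-j)) = r.choose (n-1) := by
  rcases eq_or_lt_of_le h1 with h | h
  · subst h; simp
  · rw [hockey r n h hnr]
    have e1 : r.choose (n-1) = ((r-1)+1).choose ((n-2)+1) := by congr 1 <;> omega
    rw [e1, Nat.choose_succ_succ, Nat.succ_eq_add_one]
    have e2 : n - 2 + 1 = n - 1 := by omega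
    rw [e2]
    omega

lemma expandPow (c : ℚ) (s : ℕ) :
    (X 0 + C c * X 1 : MvPolynomial (Fin 2) ℚ) ^ s
      = ∑ k ∈ range (s+1), C ((s.choose k : ℚ) * c^k) * (X 1)^k * (X 0)^(s-k) := by
  rw [add_pow]
  rw [← Finset.sum_range_reflect]
  apply Finset.sum_congr rfl
  intro k hk
  simp only [Finset.mem_range] at hk
  have hks : k ≤ s := by omega
  have h1 : s + 1 - 1 - k = s - k := by omega
  rw [h1, Nat.sub_sub_self hks, Nat.choose_symm hks]
  rw [mul_pow, ← C_pow, C_mul, C_eq_coe_nat]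
  ring

lemma triangle (r : ℕ) (g : ℕ → ℕ → MvPolynomial (Fin 2) ℚ) :
    ∑ j ∈ range (r+1), ∑ k ∈ range (r+1-j), g j k
      = ∑ n ∈ range (r+1), ∑ j ∈ range (n+1), g j (n-j) := by
  rw [Finset.sum_sigma', Finset.sum_sigma']
  apply Finset.sum_nbij' (fun p => (⟨p.1 + p.2, p.1⟩ : Σ _ : ℕ, ℕ))
    (fun p => (⟨p.2, p.1 - p.2⟩ : Σ _ : ℕ, ℕ))
  · intro a ha; simp only [Finset.mem_sigma, Finset.mem_range] at *; omega
  · intro a ha; simp only [Finset.mem_sigma, Finset.mem_range] at *; omega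
  · rintro ⟨f, s⟩ ha; simp only [Finset.mem_sigma, Finset.mem_range] at ha
    ext <;> simp <;> omega
  · rintro ⟨f, s⟩ ha; simp only [Finset.mem_sigma, Finset.mem_range] at ha
    ext <;> simp <;> omega
  · intro a ha; simp only [Finset.mem_sigma, Finset.mem_range] at ha
    simp only [Nat.add_sub_cancel_left]

theorem euler_class_change_of_basis (r : ℕ) (hr : 1 ≤ r) (χ c M m : ℚ) (hm : m ≠ 0) :
    let x : MvPolynomial (Fin 2) ℚ := X 0
    let q : MvPolynomial (Fin 2) ℚ := X 1
    C (χ / m) * x ^ r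
      + ∑ j ∈ Finset.Icc 1 r,
          C ((1 / m) * ((j : ℚ) - χ) * (r.choose (j - 1) : ℚ) * c ^ (j - 1)
              * (M - c * ((r : ℚ) + 1) / (j : ℚ)))
            * q ^ j * x ^ (r - j)
      = C (χ / m) * (x + C c * q) ^ r
        + C ((1 / m) * ((r : ℚ) + 1 - χ) * (M - c) - (M / m) * r)
            * q * (x + C c * q) ^ (r - 1)
        + ∑ j ∈ Finset.Icc 2 r,
            C ((1 / m) * c ^ (j - 1) * ((r : ℚ) + 1 - χ) * (M - c))
              * q ^ j * (x + C c * q) ^ (r - j) := by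
  intro x q
  set B : ℚ := (1 / m) * ((r : ℚ) + 1 - χ) * (M - c) - (M / m) * r with hB
  set e : ℕ → ℚ := fun j =>
    if j = 0 then χ / m else if j = 1 then B
    else (1 / m) * c ^ (j - 1) * ((r : ℚ) + 1 - χ) * (M - c) with he
  set L : ℕ → ℚ := fun n =>
    if n = 0 then χ / m
    else (1 / m) * ((n : ℚ) - χ) * (r.choose (n - 1) : ℚ) * c ^ (n - 1)
              * (M - c * ((r : ℚ) + 1) / (n : ℚ)) with hL
  have hsplit : (range (r+1) : Finset ℕ) = insert 0 (Finset.Icc 1 r) := by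
    ext a; simp [Finset.mem_range, Finset.mem_Icc, Finset.mem_insert]; omega
  have hsplit2 : (Finset.Icc 1 r : Finset ℕ) = insert 1 (Finset.Icc 2 r) := by
    ext a; simp [Finset.mem_Icc, Finset.mem_insert]; omega
  have hL0 : L 0 = χ / m := by simp [hL]
  have hLj : ∀ j : ℕ, 1 ≤ j → L j
      = (1 / m) * ((j : ℚ) - χ) * (r.choose (j - 1) : ℚ) * c ^ (j - 1)
          * (M - c * ((r : ℚ) + 1) / (j : ℚ)) := by
    intro j hj; simp only [hL]; rw [if_neg (by omega)]
  have he0 : e 0 = χ / m := by simp [he]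
  have he1 : e 1 = B := by simp [he]
  have hej : ∀ j : ℕ, 2 ≤ j → e j
      = (1 / m) * c ^ (j - 1) * ((r : ℚ) + 1 - χ) * (M - c) := by
    intro j hj; simp only [he]; rw [if_neg (by omega), if_neg (by omega)]
  -- LHS as a single sum
  have lhs_eq : C (χ / m) * x ^ r
      + ∑ j ∈ Finset.Icc 1 r,
          C ((1 / m) * ((j : ℚ) - χ) * (r.choose (j - 1) : ℚ) * c ^ (j - 1)
              * (M - c * ((r : ℚ) + 1) / (j : ℚ)))
            * q ^ j * x ^ (r - j)
      = ∑ n ∈ range (r+1), C (L n) * q ^ n * x ^ (r - n) := by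
    rw [hsplit, Finset.sum_insert (by simp), hL0]
    simp only [pow_zero, mul_one, Nat.sub_zero]
    congr 1
    apply Finset.sum_congr rfl
    intro j hj
    simp only [Finset.mem_Icc] at hj
    rw [hLj j hj.1]
  -- RHS as a single sum over e
  have rhs_eq : C (χ / m) * (x + C c * q) ^ r
        + C B * q * (x + C c * q) ^ (r - 1)
        + ∑ j ∈ Finset.Icc 2 r,
            C ((1 / m) * c ^ (j - 1) * ((r : ℚ) + 1 - χ) * (M - c))
              * q ^ j * (x + C c * q) ^ (r - j)
      = ∑ j ∈ range (r+1), C (e j) * q ^ j * (x + C c * q) ^ (r - j) := by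
    rw [hsplit, Finset.sum_insert (by simp), hsplit2,
        Finset.sum_insert (by simp), he0, he1]
    simp only [pow_zero, mul_one, Nat.sub_zero, pow_one]
    rw [add_assoc]
    congr 2
    apply Finset.sum_congr rfl
    intro j hj
    simp only [Finset.mem_Icc] at hj
    rw [hej j hj.1]
  rw [lhs_eq, rhs_eq]
  -- expand the RHS sum
  have expand : ∑ j ∈ range (r+1), C (e j) * q ^ j * (x + C c * q) ^ (r - j)
      = ∑ n ∈ range (r+1),
          C (∑ j ∈ range (n+1), e j * (((r-j).choose (n-j)) : ℚ) * c ^ (n-j))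
            * q ^ n * x ^ (r - n) := by
    have step : ∀ j ∈ range (r+1),
        C (e j) * q ^ j * (x + C c * q) ^ (r - j)
        = ∑ k ∈ range (r+1-j), C (e j * (((r-j).choose k) : ℚ) * c ^ k)
            * q ^ (j+k) * x ^ (r-j-k) := by
      intro j hj
      simp only [Finset.mem_range] at hj
      have hjr : j ≤ r := by omega
      have hr1 : r + 1 - j = (r - j) + 1 := by omega
      rw [expandPow c (r-j), Finset.mul_sum, hr1]
      apply Finset.sum_congr rfl
      intro k hk
      simp only [pow_add, C_mul]
      ring
    rw [Finset.sum_congr rfl step, triangle]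
    apply Finset.sum_congr rfl
    intro n hn
    simp only [Finset.mem_range] at hn
    have inner : ∀ j ∈ range (n+1),
        C (e j * (((r-j).choose (n-j)) : ℚ) * c ^ (n-j)) * q ^ (j+(n-j)) * x ^ (r-j-(n-j))
        = C (e j * (((r-j).choose (n-j)) : ℚ) * c ^ (n-j)) * q ^ n * x ^ (r-n) := by
      intro j hj
      simp only [Finset.mem_range] at hj
      have h1 : j + (n - j) = n := by omega
      have h2 : r - j - (n - j) = r - n := by omega
      rw [h1, h2]
    rw [Finset.sum_congr rfl inner, ← Finset.sum_mul, ← Finset.sum_mul, ← map_sum]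
  rw [expand]
  -- compare coefficients
  apply Finset.sum_congr rfl
  intro n hn
  simp only [Finset.mem_range] at hn
  have hnr : n ≤ r := by omega
  have key : L n = ∑ j ∈ range (n+1), e j * (((r-j).choose (n-j)) : ℚ) * c ^ (n-j) := by
    rcases Nat.eq_zero_or_pos n with h0 | hpos
    · subst h0
      simp [hL, he]
    · -- n ≥ 1
      have hrange : (range (n+1) : Finset ℕ) = insert 0 (insert 1 (Finset.Icc 2 n)) := by
        ext a; simp [Finset.mem_range, Finset.mem_Icc, Finset.mem_insert]; omega
      rw [hrange, Finset.sum_insert (by simp), Finset.sum_insert (by simp [Finset.mem_Icc]),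
          he0, he1, hLj n hpos]
      -- rewrite the Icc sum
      have hsum : ∑ j ∈ Finset.Icc 2 n,
          e j * (((r-j).choose (n-j)) : ℚ) * c ^ (n-j)
          = ((1/m) * ((r:ℚ)+1-χ) * (M-c)) * c^(n-1)
              * ((∑ j ∈ Finset.Icc 2 n, ((r-j).choose (n-j)) : ℕ) : ℚ) := by
        push_cast
        rw [Finset.mul_sum]
        apply Finset.sum_congr rfl
        intro j hj
        simp only [Finset.mem_Icc] at hj
        rw [hej j hj.1]
        have hcc : c ^ (j-1) * c ^ (n-j) = c ^ (n-1) := by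
          rw [← pow_add]; congr 1; omega
        calc (1 / m) * c ^ (j - 1) * ((r : ℚ) + 1 - χ) * (M - c)
              * (((r-j).choose (n-j)) : ℚ) * c ^ (n-j)
            = (1/m) * ((r:ℚ)+1-χ) * (M-c) * (c ^ (j-1) * c ^ (n-j))
                * (((r-j).choose (n-j)) : ℚ) := by ring
          _ = _ := by rw [hcc]
      rw [hsum]
      -- now a pure ℚ identity
      have hP : ((((r-1).choose (n-1)) : ℕ) : ℚ)
          + ((∑ j ∈ Finset.Icc 2 n, ((r-j).choose (n-j)) : ℕ) : ℚ)
          = ((r.choose (n-1)) : ℚ) := by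
        exact_mod_cast congrArg (Nat.cast : ℕ → ℚ) (pascal' r n hpos hnr)
      have hkey := coeffId r n hpos hnr χ c M
      have hcn : c * c ^ (n-1) = c ^ n := by
        rw [← pow_succ']; congr 1; omega
      rw [hB]
      have hchoose1 : (((r-0).choose (n-0)) : ℚ) = (r.choose n : ℚ) := by norm_num
      have hchoose2 : (((r-1).choose (n-1)) : ℚ) = (((r-1).choose (n-1)) : ℚ) := rfl
      simp only [Nat.sub_zero]
      linear_combination ((1/m) * c^(n-1)) * hkey
        - ((1/m) * ((r:ℚ)+1-χ) * (M-c) * c^(n-1)) * hP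
        + ((χ/m) * (r.choose n : ℚ)) * hcn

  rw [key]
end

section
/- Let r ≥ 1, d ≥ 1, and let A(k, s) for integers k ≥ 1 and s ∈ ℤ be commuting indeterminates (elements of a commutative polynomial ring over ℚ). For integers i with 0 ≤ i ≤ r and j ≥ 1 with jd ≤ i, define C(i, j) := ∑_{ℓ=1}^{j} (−1)^{ℓ} ∑_{(i_1,…,i_ℓ) ∈ ℤ_{≥1}^ℓ, i_1+⋯+i_ℓ = j} ∑_{0 ≤ u_ℓ ≤ ⋯ ≤ u_1 ≤ i − jd} ∏_{a=1}^{ℓ} i_a · A(i_a, r − (j − i_1 − ⋯ − i_a)d − u_a), and set C(i, 0) := 1 and C(i, j) := 0 for jd > i. Then for all 1 ≤ i ≤ r and 1 ≤ j with jd ≤ i, C satisfies the recursion C(i, j) = C(i−1, j) − ∑_{k=1}^{j} k · A(k, r − (i − kd)) · C(i − kd, j − k). -/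
open Finset

/-- The normalized two-point invariants as commuting indeterminates:
`A k s` is the variable `α^k_s` in the polynomial ring `ℚ[A(k,s) : k ∈ ℕ, s ∈ ℤ]`. -/
noncomputable def Avar (k : ℕ) (s : ℤ) : MvPolynomial (ℕ × ℤ) ℚ :=
  MvPolynomial.X (k, s)

/-- The nested-sum expression `C(i,j)` for `Coeff(H^i, q^j H^{⋆(i-jd)})`:
`C(i,0) = 1`, `C(i,j) = 0` for `jd > i`, and otherwise
`C(i,j) = ∑_{ℓ=1}^{j} (-1)^ℓ ∑_{i_1+⋯+i_ℓ=j, i_a ≥ 1} ∑_{0 ≤ u_ℓ ≤ ⋯ ≤ u_1 ≤ i-jd}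
  ∏_{a=1}^{ℓ} i_a · A(i_a, r-(j-i_1-⋯-i_a)d-u_a)`,
where the tuple `y : Fin ℓ → ℕ` encodes `(i_1,…,i_ℓ)` (with `y 0 = i_1`) and
`u : Fin ℓ → ℕ` encodes `(u_1,…,u_ℓ)` (with `u 0 = u_1`, so the chain condition
`u_ℓ ≤ ⋯ ≤ u_1` reads: `a ≤ b → u b ≤ u a`). -/
noncomputable def Ccoeff (r d i j : ℕ) : MvPolynomial (ℕ × ℤ) ℚ :=
  if j = 0 then 1
  else if i < j * d then 0
  else
    ∑ ℓ ∈ Icc 1 j, (-1 : MvPolynomial (ℕ × ℤ) ℚ) ^ ℓ *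
      ∑ y ∈ (Fintype.piFinset fun _ : Fin ℓ => Icc 1 j).filter
          (fun y => ∑ a, y a = j),
        ∑ u ∈ (Fintype.piFinset fun _ : Fin ℓ => Finset.range (i - j * d + 1)).filter
            (fun u => ∀ a b : Fin ℓ, a ≤ b → u b ≤ u a),
          ∏ a : Fin ℓ,
            (y a : MvPolynomial (ℕ × ℤ) ℚ) *
              Avar (y a)
                ((r : ℤ) - ((j : ℤ) - ∑ b ∈ Iic a, (y b : ℤ)) * (d : ℤ) - (u a : ℤ))

-- ===== helpers =====
abbrev RR := MvPolynomial (ℕ × ℤ) ℚ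

noncomputable def trm (r d j ℓ : ℕ) (y u : Fin ℓ → ℕ) : RR :=
  ∏ a : Fin ℓ, (y a : RR) * Avar (y a)
    ((r : ℤ) - ((j : ℤ) - ∑ b ∈ Iic a, (y b : ℤ)) * (d : ℤ) - (u a : ℤ))

def comps (p s ℓ : ℕ) : Finset (Fin ℓ → ℕ) :=
  (Fintype.piFinset fun _ : Fin ℓ => Icc 1 p).filter (fun y => ∑ a, y a = s)

def chains (M ℓ : ℕ) : Finset (Fin ℓ → ℕ) :=
  (Fintype.piFinset fun _ : Fin ℓ => Finset.range (M + 1)).filter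
    (fun u => ∀ a b : Fin ℓ, a ≤ b → u b ≤ u a)

def tops (M ℓ : ℕ) : Finset (Fin ℓ → ℕ) :=
  (chains M ℓ).filter (fun u => ∃ a, u a = M)

noncomputable def Dsum (r d s M ℓ : ℕ) : RR :=
  ∑ y ∈ comps s s ℓ, ∑ u ∈ chains M ℓ, trm r d s ℓ y u

noncomputable def Tsum (r d j M ℓ : ℕ) : RR :=
  ∑ y ∈ comps j j ℓ, ∑ u ∈ tops M ℓ, trm r d j ℓ y u

noncomputable def Csum (r d s M : ℕ) : RR :=
  if s = 0 then 1 else ∑ ℓ ∈ Icc 1 s, (-1 : RR) ^ ℓ * Dsum r d s M ℓ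

lemma Ccoeff_eq (r d i j : ℕ) (h : j * d ≤ i) :
    Ccoeff r d i j = Csum r d j (i - j * d) := by
  unfold Ccoeff Csum Dsum comps chains trm
  rcases eq_or_ne j 0 with rfl | hj
  · simp
  · rw [if_neg hj, if_neg (not_lt.2 h), if_neg hj]

lemma mem_comps {p s ℓ : ℕ} (hsp : s ≤ p) {y : Fin ℓ → ℕ} :
    y ∈ comps p s ℓ ↔ (∀ a, 1 ≤ y a) ∧ ∑ a, y a = s := by
  simp only [comps, mem_filter, Fintype.mem_piFinset, mem_Icc]
  constructor
  · rintro ⟨h1, h2⟩; exact ⟨fun a => (h1 a).1, h2⟩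
  · rintro ⟨h1, h2⟩
    refine ⟨fun a => ⟨h1 a, le_trans ?_ hsp⟩, h2⟩
    rw [← h2]
    exact Finset.single_le_sum (fun b _ => Nat.zero_le _) (mem_univ a)

lemma comps_congr {p q s ℓ : ℕ} (hsp : s ≤ p) (hsq : s ≤ q) :
    comps p s ℓ = comps q s ℓ := by
  ext y; rw [mem_comps hsp, mem_comps hsq]

lemma comps_empty {p s ℓ : ℕ} (h : s < ℓ) : comps p s ℓ = ∅ := by
  rw [Finset.eq_empty_iff_forall_notMem]
  intro y hy
  simp only [comps, mem_filter, Fintype.mem_piFinset, mem_Icc] at hy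
  have : (Finset.univ : Finset (Fin ℓ)).card • 1 ≤ ∑ a, y a :=
    Finset.card_nsmul_le_sum _ _ _ (fun a _ => (hy.1 a).1)
  simp [hy.2] at this
  omega

lemma Dsum_zero (r d s M : ℕ) : Dsum r d s M 0 = if s = 0 then 1 else 0 := by
  rcases eq_or_ne s 0 with rfl | hs
  · have h1 : comps 0 0 0 = Finset.univ := by
      ext y; simp [comps]
    have h2 : chains M 0 = Finset.univ := by
      ext u; simp [chains]
    rw [Dsum, h1, h2, if_pos rfl, Finset.univ_unique, Finset.sum_singleton,
      Finset.sum_singleton, trm]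
    simp
  · have h1 : comps s s 0 = ∅ := by
      ext y; simp [comps, Ne.symm hs]
    rw [Dsum, h1, if_neg hs, Finset.sum_empty]

-- splitting chains
lemma sum_chains_succ {M ℓ : ℕ} (f : (Fin ℓ → ℕ) → RR) :
    ∑ u ∈ chains (M + 1) ℓ, f u = ∑ u ∈ chains M ℓ, f u + ∑ u ∈ tops (M + 1) ℓ, f u := by
  have h := Finset.sum_filter_add_sum_filter_not (chains (M + 1) ℓ)
    (fun u => ∃ a, u a = M + 1) f
  have h2 : (chains (M + 1) ℓ).filter (fun u => ¬ ∃ a, u a = M + 1) = chains M ℓ := by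
    ext u
    simp only [chains, Finset.mem_filter, Fintype.mem_piFinset, Finset.mem_range,
      not_exists]
    constructor
    · rintro ⟨⟨h1, h2⟩, h3⟩
      exact ⟨fun a => by have := h1 a; have := h3 a; omega, h2⟩
    · rintro ⟨h1, h2⟩
      exact ⟨⟨fun a => by have := h1 a; omega, h2⟩, fun a => by have := h1 a; omega⟩
  rw [h2] at h
  rw [← h, tops, add_comm]

lemma chains_eq_tops_zero {ℓ : ℕ} (h : 0 < ℓ) : chains 0 ℓ = tops 0 ℓ := by
  rw [tops, eq_comm, Finset.filter_true_of_mem]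
  intro u hu
  refine ⟨⟨0, h⟩, ?_⟩
  simp only [chains, Finset.mem_filter, Fintype.mem_piFinset, Finset.mem_range] at hu
  have := hu.1 ⟨0, h⟩
  omega

-- bijections
lemma sum_tops_succ {M ℓ' : ℕ} (f : (Fin (ℓ' + 1) → ℕ) → RR) :
    ∑ u ∈ tops M (ℓ' + 1), f u = ∑ u' ∈ chains M ℓ', f (Fin.cons M u') := by
  have key : ∀ u ∈ tops M (ℓ' + 1), u 0 = M := by
    intro u hu
    simp only [tops, chains, mem_filter, Fintype.mem_piFinset, mem_range] at hu
    obtain ⟨⟨h1, h2⟩, a, ha⟩ := hu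
    have := h2 0 a (Fin.zero_le a)
    have := h1 0
    omega
  apply Finset.sum_nbij' (i := fun u => u ∘ Fin.succ) (j := fun u' => Fin.cons M u')
  · -- maps tops → chains
    intro u hu
    have h0 := key u hu
    simp only [tops, chains, mem_filter, Fintype.mem_piFinset, mem_range] at hu ⊢
    obtain ⟨⟨h1, h2⟩, -⟩ := hu
    constructor
    · intro a
      have := h2 0 a.succ (Fin.zero_le _)
      simp only [Function.comp_apply]
      omega
    · intro a b hab
      exact h2 a.succ b.succ (Fin.succ_le_succ_iff.2 hab)
  · -- maps chains → tops
    intro u' hu'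
    simp only [tops, chains, mem_filter, Fintype.mem_piFinset, mem_range] at hu' ⊢
    obtain ⟨h1, h2⟩ := hu'
    refine ⟨⟨?_, ?_⟩, ⟨0, Fin.cons_zero _ _⟩⟩
    · intro a
      induction a using Fin.cases with
      | zero => simp
      | succ c => simp only [Fin.cons_succ]; exact h1 c
    · intro a b hab
      induction a using Fin.cases with
      | zero =>
        induction b using Fin.cases with
        | zero => exact le_refl _
        | succ c => simp only [Fin.cons_succ, Fin.cons_zero]; have := h1 c; omega
      | succ c =>
        induction b using Fin.cases with
        | zero =>
          exact absurd (Fin.le_zero_iff.1 hab) (Fin.succ_ne_zero c)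
        | succ e =>
          simp only [Fin.cons_succ]
          exact h2 c e (Fin.succ_le_succ_iff.1 hab)
  · intro u hu
    have h0 := key u hu
    rw [← h0]
    exact Fin.cons_self_tail u
  · intro u' _
    funext a
    simp [Fin.cons_succ]
  · intro u hu
    have h0 := key u hu
    congr 1
    rw [← h0]
    exact (Fin.cons_self_tail u).symm

lemma sum_comps_succ {j ℓ' : ℕ} (f : (Fin (ℓ' + 1) → ℕ) → RR) :
    ∑ y ∈ comps j j (ℓ' + 1), f y
      = ∑ k ∈ Icc 1 j, ∑ y' ∈ comps j (j - k) ℓ', f (Fin.cons k y') := by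
  rw [Finset.sum_sigma' (Icc 1 j) (fun k => comps j (j - k) ℓ')
    (fun k y' => f (Fin.cons k y'))]
  apply Finset.sum_nbij' (i := fun y => (⟨y 0, y ∘ Fin.succ⟩ : Σ _ : ℕ, (Fin ℓ' → ℕ)))
    (j := fun p => Fin.cons p.1 p.2)
  · -- comps → sigma
    intro y hy
    simp only [comps, mem_filter, Fintype.mem_piFinset, mem_Icc] at hy
    obtain ⟨h1, h2⟩ := hy
    rw [Fin.sum_univ_succ] at h2
    simp only [Finset.mem_sigma, mem_Icc, comps, mem_filter, Fintype.mem_piFinset, mem_Icc]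
    have h00 := h1 0
    refine ⟨⟨h00.1, h00.2⟩, fun a => h1 a.succ, ?_⟩
    simp only [Function.comp_apply]
    omega
  · -- sigma → comps
    rintro ⟨k, y'⟩ hp
    simp only [Finset.mem_sigma, mem_Icc, comps, mem_filter, Fintype.mem_piFinset,
      mem_Icc] at hp ⊢
    obtain ⟨⟨hk1, hk2⟩, h1, h2⟩ := hp
    constructor
    · intro a
      induction a using Fin.cases with
      | zero => simp only [Fin.cons_zero]; exact ⟨hk1, hk2⟩
      | succ c => simp only [Fin.cons_succ]; exact h1 c
    · rw [Fin.sum_univ_succ]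
      simp only [Fin.cons_zero, Fin.cons_succ]
      omega
  · intro y _
    exact Fin.cons_self_tail y
  · rintro ⟨k, y'⟩ _
    refine Sigma.ext ?_ ?_
    · simp
    · simp only [Fin.cons_zero]
      refine heq_of_eq ?_
      funext a
      simp [Fin.cons_succ]
  · intro y _
    rw [show Fin.cons (y 0) (y ∘ Fin.succ) = y from Fin.cons_self_tail y]

lemma sum_Iic_succ {n : ℕ} (y : Fin (n + 1) → ℤ) (a : Fin n) :
    ∑ b ∈ Iic a.succ, y b = y 0 + ∑ b ∈ Iic a, y b.succ := by
  have h : Iic a.succ = insert (0 : Fin (n + 1)) ((Iic a).map (Fin.succEmb n)) := by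
    ext b
    simp only [mem_Iic, mem_insert, mem_map, Fin.succEmb, Function.Embedding.coeFn_mk]
    induction b using Fin.cases with
    | zero => simp [Fin.zero_le]
    | succ c =>
      simp only [Fin.succ_le_succ_iff]
      constructor
      · intro hc; exact Or.inr ⟨c, hc, rfl⟩
      · rintro (hc | ⟨c', hc', he⟩)
        · exact absurd hc (Fin.succ_ne_zero c)
        · rwa [← Fin.succ_injective n he]
  rw [h, Finset.sum_insert, Finset.sum_map]
  · rfl
  · simp [Fin.succ_ne_zero]

lemma trm_cons (r d j k ℓ' M : ℕ) (hk : k ≤ j) (y' u' : Fin ℓ' → ℕ) :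
    trm r d j (ℓ' + 1) (Fin.cons k y') (Fin.cons M u')
      = ((k : RR) * Avar k ((r : ℤ) - ((j : ℤ) - (k : ℤ)) * d - M)) * trm r d (j - k) ℓ' y' u' := by
  rw [trm, trm, Fin.prod_univ_succ]
  refine congrArg₂ (· * ·) ?_ ?_
  · have h0 : (Iic (0 : Fin (ℓ' + 1))) = {0} := by
      ext b; simp [Fin.le_zero_iff]
    rw [h0, Finset.sum_singleton, Fin.cons_zero, Fin.cons_zero]
  · apply Finset.prod_congr rfl
    intro a _
    rw [sum_Iic_succ (fun b => (Nat.cast (Fin.cons (α := fun _ => ℕ) k y' b) : ℤ)) a]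
    rw [show ((Fin.cons (α := fun _ => ℕ) k y' 0 : ℕ) : ℤ) = (k : ℤ) by rw [Fin.cons_zero]]
    simp only [Fin.cons_succ]
    congr 2
    push_cast [hk]
    ring

lemma sum_Icc_one {j : ℕ} (f : ℕ → RR) :
    ∑ ℓ ∈ Icc 1 j, f ℓ = ∑ ℓ' ∈ range j, f (ℓ' + 1) := by
  apply Finset.sum_nbij' (i := fun ℓ => ℓ - 1) (j := fun ℓ' => ℓ' + 1)
  · intro a ha; simp only [mem_Icc] at ha; simp only [mem_range]; omega
  · intro a ha; simp only [mem_range] at ha; simp only [mem_Icc]; omega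
  · intro a ha; simp only [mem_Icc] at ha; omega
  · intro a ha; omega
  · intro a ha; simp only [mem_Icc] at ha; congr 1; omega

lemma range_sum_eq_Csum (r d s M j : ℕ) (hs : s < j) :
    ∑ ℓ' ∈ range j, (-1 : RR) ^ ℓ' * Dsum r d s M ℓ' = Csum r d s M := by
  rcases eq_or_ne s 0 with rfl | hs0
  · rw [Csum, if_pos rfl]
    rw [Finset.sum_eq_single_of_mem 0 (mem_range.2 hs)]
    · rw [Dsum_zero, if_pos rfl, pow_zero, one_mul]
    · intro ℓ' _ hne
      have hℓ : 0 < ℓ' := Nat.pos_of_ne_zero hne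
      rw [Dsum, comps_empty hℓ, Finset.sum_empty, mul_zero]
  · rw [Csum, if_neg hs0]
    rw [eq_comm]
    apply Finset.sum_subset
    · intro ℓ hℓ; simp only [mem_Icc] at hℓ; simp only [mem_range]; omega
    · intro ℓ _ hℓ
      simp only [mem_Icc, not_and, not_le] at hℓ
      rcases Nat.eq_zero_or_pos ℓ with rfl | hpos
      · rw [Dsum_zero, if_neg hs0, mul_zero]
      · have : s < ℓ := hℓ hpos
        rw [Dsum, comps_empty this, Finset.sum_empty, mul_zero]

lemma key (r d j M : ℕ) (hj : 1 ≤ j) :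
    ∑ ℓ ∈ Icc 1 j, (-1 : RR) ^ ℓ * Tsum r d j M ℓ
      = - ∑ k ∈ Icc 1 j, (k : RR) * Avar k ((r : ℤ) - ((j : ℤ) - k) * d - M) * Csum r d (j - k) M := by
  have hT : ∀ ℓ' : ℕ, Tsum r d j M (ℓ' + 1)
      = ∑ k ∈ Icc 1 j,
          ((k : RR) * Avar k ((r : ℤ) - ((j : ℤ) - k) * d - M)) * Dsum r d (j - k) M ℓ' := by
    intro ℓ'
    rw [Tsum, sum_comps_succ (f := fun y => ∑ u ∈ tops M (ℓ' + 1), trm r d j (ℓ' + 1) y u)]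
    apply Finset.sum_congr rfl
    intro k hk
    rw [mem_Icc] at hk
    rw [Dsum, comps_congr (Nat.sub_le j k) (le_refl (j - k)), Finset.mul_sum]
    apply Finset.sum_congr rfl
    intro y' _
    rw [sum_tops_succ (f := fun u => trm r d j (ℓ' + 1) (Fin.cons k y') u), Finset.mul_sum]
    apply Finset.sum_congr rfl
    intro u' _
    exact trm_cons r d j k ℓ' M hk.2 y' u'
  rw [sum_Icc_one (f := fun ℓ => (-1 : RR) ^ ℓ * Tsum r d j M ℓ)]
  have step : ∀ ℓ' ∈ range j, (-1 : RR) ^ (ℓ' + 1) * Tsum r d j M (ℓ' + 1)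
      = ∑ k ∈ Icc 1 j,
          -(((k : RR) * Avar k ((r : ℤ) - ((j : ℤ) - k) * d - M)) *
            ((-1 : RR) ^ ℓ' * Dsum r d (j - k) M ℓ')) := by
    intro ℓ' _
    rw [hT, Finset.mul_sum]
    apply Finset.sum_congr rfl
    intro k _
    ring
  rw [Finset.sum_congr rfl step, Finset.sum_comm, ← Finset.sum_neg_distrib]
  apply Finset.sum_congr rfl
  intro k hk
  rw [mem_Icc] at hk
  rw [← range_sum_eq_Csum r d (j - k) M j (by omega), Finset.mul_sum,
    ← Finset.sum_neg_distrib]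

lemma Dsum_succ (r d s M ℓ : ℕ) :
    Dsum r d s (M + 1) ℓ = Dsum r d s M ℓ + Tsum r d s (M + 1) ℓ := by
  rw [Dsum, Dsum, Tsum, ← Finset.sum_add_distrib]
  exact Finset.sum_congr rfl fun y _ => sum_chains_succ _

lemma Csum_succ (r d j M : ℕ) (hj : 1 ≤ j) :
    Csum r d j (M + 1) = Csum r d j M + ∑ ℓ ∈ Icc 1 j, (-1 : RR) ^ ℓ * Tsum r d j (M + 1) ℓ := by
  have hjne : j ≠ 0 := by omega
  rw [Csum, Csum, if_neg hjne, if_neg hjne, ← Finset.sum_add_distrib]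
  apply Finset.sum_congr rfl
  intro ℓ _
  rw [Dsum_succ]
  ring

theorem Ccoeff_recursion (r d : ℕ) (hr : 1 ≤ r) (hd : 1 ≤ d) :
    ∀ i j : ℕ, 1 ≤ i → i ≤ r → 1 ≤ j → j * d ≤ i →
      Ccoeff r d i j
        = Ccoeff r d (i - 1) j
          - ∑ k ∈ Icc 1 j,
              (k : MvPolynomial (ℕ × ℤ) ℚ) *
                Avar k ((r : ℤ) - ((i : ℤ) - (k : ℤ) * (d : ℤ))) *
                Ccoeff r d (i - k * d) (j - k) := by
  intro i j hi1 hir hj1 hjd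
  have hjne : j ≠ 0 := by omega
  have hsum : ∑ k ∈ Icc 1 j,
        (k : RR) * Avar k ((r : ℤ) - ((i : ℤ) - (k : ℤ) * (d : ℤ))) *
          Ccoeff r d (i - k * d) (j - k)
      = ∑ k ∈ Icc 1 j,
        (k : RR) * Avar k ((r : ℤ) - ((j : ℤ) - k) * d - ((i - j * d : ℕ) : ℤ)) *
          Csum r d (j - k) (i - j * d) := by
    apply Finset.sum_congr rfl
    intro k hk
    rw [mem_Icc] at hk
    have hkd : k * d ≤ j * d := Nat.mul_le_mul_right d hk.2
    have hsub : (j - k) * d ≤ i - k * d := by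
      rw [Nat.sub_mul]; omega
    have hMM : (i - k * d) - (j - k) * d = i - j * d := by
      rw [Nat.sub_mul]; omega
    rw [Ccoeff_eq r d (i - k * d) (j - k) hsub, hMM]
    have harg : (r : ℤ) - ((i : ℤ) - (k : ℤ) * (d : ℤ))
        = (r : ℤ) - ((j : ℤ) - k) * d - ((i - j * d : ℕ) : ℤ) := by
      have hc : ((i - j * d : ℕ) : ℤ) = (i : ℤ) - (j : ℤ) * d := by
        push_cast [hjd]; ring
      rw [hc]; ring
    rw [harg]
  rw [hsum, Ccoeff_eq r d i j hjd]
  rcases Nat.eq_zero_or_pos (i - j * d) with h0 | hpos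
  · rw [h0]
    have hC1 : Ccoeff r d (i - 1) j = 0 := by
      rw [Ccoeff, if_neg hjne, if_pos (by omega)]
    rw [hC1, zero_sub]
    rw [Csum, if_neg hjne]
    have hconv : ∀ ℓ ∈ Icc 1 j, (-1 : RR) ^ ℓ * Dsum r d j 0 ℓ = (-1 : RR) ^ ℓ * Tsum r d j 0 ℓ := by
      intro ℓ hℓ
      rw [mem_Icc] at hℓ
      rw [Dsum, Tsum, chains_eq_tops_zero (by omega)]
    rw [Finset.sum_congr rfl hconv, key r d j 0 hj1]
  · obtain ⟨M', hM'⟩ : ∃ M', i - j * d = M' + 1 := ⟨i - j * d - 1, by omega⟩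
    rw [hM']
    have h1 : j * d ≤ i - 1 := by omega
    have h2 : (i - 1) - j * d = M' := by omega
    rw [Ccoeff_eq r d (i - 1) j h1, h2, Csum_succ r d j M' hj1, key r d j (M' + 1) hj1,
      sub_eq_add_neg]
end
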